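/- For every even positive integer k, if G1 and G2 are both paths on k+2 vertices, then α_k(G1 × G2) = 4 = α_k(G1) · α_k(G2). -/

import Mathlib

open SimpleGraph

/-- The `k`-independence number: the maximum size of a set of vertices at pairwise
distance greater than `k`. -/
noncomputable def kIndepNum {V : Type*} [Fintype V] (G : SimpleGraph V) (k : ℕ) : ℕ :=
  sSup {n | ∃ s : Finset V, s.card = n ∧ ∀ u ∈ s, ∀ v ∈ s, u ≠ v → (k : ℕ∞) < G.edist u v}

/-- The tensor (direct / categorical) product of two simple graphs. -/
def tensorProd {V1 V2 : Type*} (G1 : SimpleGraph V1) (G2 : SimpleGraph V2) :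
    SimpleGraph (V1 × V2) where
  Adj a b := G1.Adj a.1 b.1 ∧ G2.Adj a.2 b.2
  symm := by constructor; intro a b ⟨h1, h2⟩; exact ⟨h1.symm, h2.symm⟩
  loopless := by constructor; intro a ⟨h1, _⟩; exact G1.irrefl h1

/-! ### Auxiliary lemmas about walks in path graphs -/

lemma path_walk_exists {m : ℕ} (hm : 2 ≤ m) :
    ∀ (n : ℕ) (a b : Fin m), (a : ℕ) - b + ((b : ℕ) - a) ≤ n →
      ((a : ℕ) - b + ((b : ℕ) - a)) % 2 = n % 2 →
      ∃ w : (pathGraph m).Walk a b, w.length = n := by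
  intro n
  induction n with
  | zero =>
    intro a b h1 _
    have : a = b := Fin.ext (by omega)
    subst this
    exact ⟨.nil, rfl⟩
  | succ n ih =>
    intro a b h1 h2
    have ha := a.isLt
    have hb := b.isLt
    rcases lt_trichotomy (a : ℕ) (b : ℕ) with hab | hab | hab
    · set a' : Fin m := ⟨(a : ℕ) + 1, by omega⟩ with ha'
      have hadj : (pathGraph m).Adj a a' := pathGraph_adj.mpr (Or.inl rfl)
      obtain ⟨w, hw⟩ := ih a' b (by show (a : ℕ) + 1 - b + ((b : ℕ) - ((a : ℕ) + 1)) ≤ n; omega)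
        (by show ((a : ℕ) + 1 - b + ((b : ℕ) - ((a : ℕ) + 1))) % 2 = n % 2; omega)
      exact ⟨.cons hadj w, by simp [hw]⟩
    · -- a = b, need a zigzag
      have hd : (a : ℕ) - b + ((b : ℕ) - a) = 0 := by omega
      have hn : n % 2 = 1 := by omega
      by_cases hlt : (a : ℕ) + 1 < m
      · set a' : Fin m := ⟨(a : ℕ) + 1, hlt⟩ with ha'
        have hadj : (pathGraph m).Adj a a' := pathGraph_adj.mpr (Or.inl rfl)
        obtain ⟨w, hw⟩ := ih a' b (by show (a : ℕ) + 1 - b + ((b : ℕ) - ((a : ℕ) + 1)) ≤ n; omega)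
          (by show ((a : ℕ) + 1 - b + ((b : ℕ) - ((a : ℕ) + 1))) % 2 = n % 2; omega)
        exact ⟨.cons hadj w, by simp [hw]⟩
      · have hapos : 1 ≤ (a : ℕ) := by omega
        set a' : Fin m := ⟨(a : ℕ) - 1, by omega⟩ with ha'
        have hadj : (pathGraph m).Adj a a' := pathGraph_adj.mpr (Or.inr (by
          show (a : ℕ) - 1 + 1 = a; omega))
        obtain ⟨w, hw⟩ := ih a' b (by show (a : ℕ) - 1 - b + ((b : ℕ) - ((a : ℕ) - 1)) ≤ n; omega)
          (by show ((a : ℕ) - 1 - b + ((b : ℕ) - ((a : ℕ) - 1))) % 2 = n % 2; omega)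
        exact ⟨.cons hadj w, by simp [hw]⟩
    · set a' : Fin m := ⟨(a : ℕ) - 1, by omega⟩ with ha'
      have hadj : (pathGraph m).Adj a a' := pathGraph_adj.mpr (Or.inr (by
        show (a : ℕ) - 1 + 1 = a; omega))
      obtain ⟨w, hw⟩ := ih a' b (by show (a : ℕ) - 1 - b + ((b : ℕ) - ((a : ℕ) - 1)) ≤ n; omega)
        (by show ((a : ℕ) - 1 - b + ((b : ℕ) - ((a : ℕ) - 1))) % 2 = n % 2; omega)
      exact ⟨.cons hadj w, by simp [hw]⟩

lemma path_walk_lb {m : ℕ} {a b : Fin m} (w : (pathGraph m).Walk a b) :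
    (a : ℕ) - b + ((b : ℕ) - a) ≤ w.length := by
  induction w with
  | nil => simp
  | @cons u c d h p ih =>
    rcases pathGraph_adj.mp h with h' | h' <;> · simp only [SimpleGraph.Walk.length_cons]; omega

lemma path_walk_parity {m : ℕ} {a b : Fin m} (w : (pathGraph m).Walk a b) :
    ((a : ℕ) + w.length) % 2 = (b : ℕ) % 2 := by
  induction w with
  | nil => simp
  | @cons u c d h p ih =>
    rcases pathGraph_adj.mp h with h' | h' <;> · simp only [SimpleGraph.Walk.length_cons]; omega

/-! ### Auxiliary lemmas about the tensor product -/

lemma tensor_zip {V1 V2 : Type*} {G1 : SimpleGraph V1} {G2 : SimpleGraph V2} :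
    ∀ {a1 b1 : V1} (w1 : G1.Walk a1 b1) {a2 b2 : V2} (w2 : G2.Walk a2 b2),
      w1.length = w2.length →
      ∃ w : (tensorProd G1 G2).Walk (a1, a2) (b1, b2), w.length = w1.length := by
  intro a1 b1 w1
  induction w1 with
  | nil =>
    intro a2 b2 w2 h
    cases w2 with
    | nil => exact ⟨.nil, rfl⟩
    | cons _ _ => simp at h
  | cons h1 p1 ih =>
    intro a2 b2 w2 hlen
    cases w2 with
    | nil => simp at hlen
    | cons h2 p2 =>
      obtain ⟨w, hw⟩ := ih p2 (by simpa using hlen)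
      exact ⟨.cons ⟨h1, h2⟩ w, by show w.length + 1 = p1.length + 1; rw [hw]⟩

/-- Projection onto the first factor as a graph homomorphism. -/
def tensorFst {V1 V2 : Type*} (G1 : SimpleGraph V1) (G2 : SimpleGraph V2) :
    tensorProd G1 G2 →g G1 :=
  ⟨Prod.fst, fun h => h.1⟩

/-- Projection onto the second factor as a graph homomorphism. -/
def tensorSnd {V1 V2 : Type*} (G1 : SimpleGraph V1) (G2 : SimpleGraph V2) :
    tensorProd G1 G2 →g G2 :=
  ⟨Prod.snd, fun h => h.2⟩

lemma tensor_proj {V1 V2 : Type*} {G1 : SimpleGraph V1} {G2 : SimpleGraph V2}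
    {a b : V1 × V2} (w : (tensorProd G1 G2).Walk a b) :
    (∃ w1 : G1.Walk a.1 b.1, w1.length = w.length) ∧
      (∃ w2 : G2.Walk a.2 b.2, w2.length = w.length) :=
  ⟨⟨w.map (tensorFst G1 G2), w.length_map _⟩, ⟨w.map (tensorSnd G1 G2), w.length_map _⟩⟩

/-! ### Distance estimates -/

lemma path_edist_ge {m : ℕ} (a b : Fin m) (n : ℕ) (h : n ≤ (a : ℕ) - b + ((b : ℕ) - a)) :
    (n : ℕ∞) ≤ (pathGraph m).edist a b :=
  le_iInf fun w => by exact_mod_cast le_trans h (path_walk_lb w)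

lemma path_edist_le {m : ℕ} (hm : 2 ≤ m) (a b : Fin m) :
    (pathGraph m).edist a b ≤ (((a : ℕ) - b + ((b : ℕ) - a) : ℕ) : ℕ∞) := by
  obtain ⟨w, hw⟩ := path_walk_exists hm ((a : ℕ) - b + ((b : ℕ) - a)) a b le_rfl rfl
  calc (pathGraph m).edist a b ≤ w.length := SimpleGraph.edist_le w
  _ = _ := by rw [hw]

lemma tensor_edist_ge {m : ℕ} (a b : Fin m × Fin m) (n : ℕ)
    (h : n ≤ (a.1 : ℕ) - b.1 + ((b.1 : ℕ) - a.1)) :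
    (n : ℕ∞) ≤ (tensorProd (pathGraph m) (pathGraph m)).edist a b :=
  le_iInf fun w => by
    obtain ⟨⟨w1, hw1⟩, _⟩ := tensor_proj w
    have := path_walk_lb w1
    exact_mod_cast le_trans (le_trans h this) (le_of_eq hw1)

lemma tensor_unreachable {m : ℕ} {a b : Fin m × Fin m}
    (h : ((a.1 : ℕ) + (a.2 : ℕ)) % 2 ≠ ((b.1 : ℕ) + (b.2 : ℕ)) % 2) :
    (tensorProd (pathGraph m) (pathGraph m)).edist a b = ⊤ := by
  apply SimpleGraph.edist_eq_top_of_not_reachable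
  rintro ⟨w⟩
  obtain ⟨⟨w1, hw1⟩, ⟨w2, hw2⟩⟩ := tensor_proj w
  have p1 := path_walk_parity w1
  have p2 := path_walk_parity w2
  omega

/-! ### Computing the independence numbers -/

lemma kIndepNum_eq {V : Type*} [Fintype V] (G : SimpleGraph V) (k n : ℕ) (s : Finset V)
    (hcard : s.card = n)
    (hs : ∀ u ∈ s, ∀ v ∈ s, u ≠ v → (k : ℕ∞) < G.edist u v)
    (hub : ∀ t : Finset V, (∀ u ∈ t, ∀ v ∈ t, u ≠ v → (k : ℕ∞) < G.edist u v) → t.card ≤ n) :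
    kIndepNum G k = n := by
  have hbdd : ∀ x ∈ {n | ∃ s : Finset V, s.card = n ∧
      ∀ u ∈ s, ∀ v ∈ s, u ≠ v → (k : ℕ∞) < G.edist u v}, x ≤ n := by
    rintro x ⟨t, ht, hp⟩
    exact ht ▸ hub t hp
  exact le_antisymm (csSup_le ⟨n, s, hcard, hs⟩ hbdd) (le_csSup ⟨n, hbdd⟩ ⟨s, hcard, hs⟩)

theorem kIndepNum_tensorProd_path (k : ℕ) (hk : 0 < k) (hke : Even k) :
    kIndepNum (tensorProd (pathGraph (k + 2)) (pathGraph (k + 2))) k = 4 ∧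
      4 = kIndepNum (pathGraph (k + 2)) k * kIndepNum (pathGraph (k + 2)) k := by
  have hk2 : k % 2 = 0 := Nat.even_iff.mp hke
  have hm : 2 ≤ k + 2 := by omega
  set z : Fin (k + 2) := ⟨0, by omega⟩ with hz
  set t : Fin (k + 2) := ⟨k + 1, by omega⟩ with ht
  have hzt : z ≠ t := by
    intro h
    have : (z : ℕ) = (t : ℕ) := by rw [h]
    simp [hz, ht] at this
  -- key distance facts
  have hfar : (k : ℕ∞) < (pathGraph (k + 2)).edist z t := by
    have := path_edist_ge z t (k + 1) (by show k + 1 ≤ 0 - (k+1) + ((k+1) - 0); omega)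
    exact lt_of_lt_of_le (by exact_mod_cast lt_add_one k) this
  -- the k-independence number of the path is 2
  have hpath : kIndepNum (pathGraph (k + 2)) k = 2 := by
    apply kIndepNum_eq _ _ _ ({z, t} : Finset (Fin (k + 2)))
    · rw [Finset.card_insert_of_notMem (by simpa using hzt), Finset.card_singleton]
    · intro u hu v hv huv
      simp only [Finset.mem_insert, Finset.mem_singleton] at hu hv
      rcases hu with rfl | rfl <;> rcases hv with rfl | rfl
      · exact absurd rfl huv
      · exact hfar
      · exact SimpleGraph.edist_comm (u := z) (v := t) ▸ hfar
      · exact absurd rfl huv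
    · intro s hs
      by_contra hcard
      push_neg at hcard
      obtain ⟨a, b, c, ha, hb, hc, hab, hac, hbc⟩ := Finset.two_lt_card_iff.mp hcard
      have d1 := lt_of_lt_of_le (hs a ha b hb hab) (path_edist_le hm a b)
      have d2 := lt_of_lt_of_le (hs a ha c hc hac) (path_edist_le hm a c)
      have d3 := lt_of_lt_of_le (hs b hb c hc hbc) (path_edist_le hm b c)
      rw [Nat.cast_lt] at d1 d2 d3
      have := a.isLt; have := b.isLt; have := c.isLt
      omega
  refine ⟨?_, by rw [hpath]⟩
  -- the tensor product side
  apply kIndepNum_eq _ _ _ ({(z, z), (z, t), (t, z), (t, t)} : Finset (Fin (k+2) × Fin (k+2)))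
  · have h1 : ((z, z) : Fin (k+2) × Fin (k+2)) ∉
        ({(z, t), (t, z), (t, t)} : Finset (Fin (k+2) × Fin (k+2))) := by
      simp [Prod.ext_iff, hzt, hzt.symm]
    have h2 : ((z, t) : Fin (k+2) × Fin (k+2)) ∉
        ({(t, z), (t, t)} : Finset (Fin (k+2) × Fin (k+2))) := by
      simp [Prod.ext_iff, hzt, hzt.symm]
    have h3 : ((t, z) : Fin (k+2) × Fin (k+2)) ∉
        ({(t, t)} : Finset (Fin (k+2) × Fin (k+2))) := by
      simp [Prod.ext_iff, hzt, hzt.symm]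
    rw [Finset.card_insert_of_notMem h1, Finset.card_insert_of_notMem h2,
      Finset.card_insert_of_notMem h3, Finset.card_singleton]
  · -- pairwise distances
    have hunreach : ∀ a b : Fin (k+2) × Fin (k+2),
        ((a.1 : ℕ) + (a.2 : ℕ)) % 2 ≠ ((b.1 : ℕ) + (b.2 : ℕ)) % 2 →
        (k : ℕ∞) < (tensorProd (pathGraph (k+2)) (pathGraph (k+2))).edist a b := by
      intro a b h
      rw [tensor_unreachable h]
      exact lt_top_iff_ne_top.mpr (by simp)
    have hge : ∀ a b : Fin (k+2) × Fin (k+2),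
        k + 1 ≤ (a.1 : ℕ) - b.1 + ((b.1 : ℕ) - a.1) →
        (k : ℕ∞) < (tensorProd (pathGraph (k+2)) (pathGraph (k+2))).edist a b := by
      intro a b h
      exact lt_of_lt_of_le (by exact_mod_cast lt_add_one k) (tensor_edist_ge a b (k + 1) h)
    intro u hu v hv huv
    have hzv : (z : ℕ) = 0 := rfl
    have htv : (t : ℕ) = k + 1 := rfl
    simp only [Finset.mem_insert, Finset.mem_singleton] at hu hv
    rcases hu with rfl | rfl | rfl | rfl <;> rcases hv with rfl | rfl | rfl | rfl <;>
      first
      | exact absurd rfl huv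
      | (apply hunreach; simp only [hzv, htv]; omega)
      | (apply hge; simp only [hzv, htv]; omega)
  · -- upper bound 4 by pigeonhole on parities
    intro s hs
    by_contra hcard
    push_neg at hcard
    have hmaps : ∀ a ∈ s, (fun u : Fin (k+2) × Fin (k+2) =>
        ((⟨(u.1 : ℕ) % 2, by omega⟩ : Fin 2), (⟨(u.2 : ℕ) % 2, by omega⟩ : Fin 2))) a ∈
        (Finset.univ : Finset (Fin 2 × Fin 2)) := fun a _ => Finset.mem_univ _
    have hlt : (Finset.univ : Finset (Fin 2 × Fin 2)).card < s.card := by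
      simp only [Finset.card_univ, Fintype.card_prod, Fintype.card_fin]
      omega
    obtain ⟨u, hu, v, hv, huv, hfuv⟩ :=
      Finset.exists_ne_map_eq_of_card_lt_of_maps_to hlt hmaps
    simp only [Prod.mk.injEq, Fin.mk.injEq] at hfuv
    obtain ⟨hp1, hp2⟩ := hfuv
    -- construct a walk of length k between u and v
    have h1 := u.1.isLt; have h2 := u.2.isLt; have h3 := v.1.isLt; have h4 := v.2.isLt
    obtain ⟨w1, hw1⟩ := path_walk_exists hm k u.1 v.1 (by omega) (by omega)
    obtain ⟨w2, hw2⟩ := path_walk_exists hm k u.2 v.2 (by omega) (by omega)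
    obtain ⟨w, hw⟩ := tensor_zip w1 w2 (by rw [hw1, hw2])
    have hle : (tensorProd (pathGraph (k+2)) (pathGraph (k+2))).edist u v ≤ (k : ℕ∞) := by
      have := SimpleGraph.edist_le w
      rwa [hw, hw1] at this
    exact absurd (lt_of_lt_of_le (hs u hu v hv huv) hle) (lt_irrefl _)
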